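/- Let λ : Fin 4 → (ZMod 2)² be given by λ₁ = λ₃ = (1,0) and λ₂ = λ₄ = (0,1), and call (i,j) adjacent if (i,j) ∈ {(1,2),(2,3),(3,4),(4,1)}. Let G be the presented group with generators β_{i,g} for i ∈ Fin 4 and g ∈ (ZMod 2)², and relators: β_{i,g}·β_{i,g+λᵢ} for all i and g; β_{i,g}·β_{j,g+λᵢ}·β_{i,g+λⱼ}⁻¹·β_{j,g}⁻¹ for all adjacent pairs (i,j) and all g; and β_{1,g} and β_{2,g} for all g. Let γ : (ZMod 2)² → W be γ(a,b) = s₁^a · s₂^b, let ψ : G → W be the homomorphism determined by β_{i,g} ↦ γ(g + λᵢ) · sᵢ · γ(g), and let φ : W → (ZMod 2)² be the homomorphism with φ(s₁) = φ(s₃) = (1,0) and φ(s₂) = φ(s₄) = (0,1). Then ψ is injective and its image equals ker φ; i.e. the sequence 1 → G → W → (ZMod 2)² → 1, with maps ψ and φ, is exact. -/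

import Mathlib

/-- The Coxeter matrix of the 4-cycle: off-diagonal entries are `2` for cyclically adjacent
indices and `0` (i.e. `∞`) for the two opposite pairs. -/
def C4 : CoxeterMatrix (Fin 4) where
  M := Matrix.of fun i j : Fin 4 ↦
    if i = j then 1
    else if (i.val + 1) % 4 = j.val ∨ (j.val + 1) % 4 = i.val then 2 else 0
  off_diagonal := by
    intro i i' h
    fin_cases i <;> fin_cases i' <;> simp_all

/-- `W`, the right-angled Coxeter group of the 4-cycle. -/
abbrev W : Type := C4.Group

/-- The simple reflections `s₁, s₂, s₃, s₄` of `W`, indexed by `Fin 4`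
(so `s 0 = s₁`, `s 1 = s₂`, `s 2 = s₃`, `s 3 = s₄`). -/
def s (i : Fin 4) : W := C4.simple i

/-- The coloring `λ` of the four edges of the square: `λ₁ = λ₃ = (1,0)`, `λ₂ = λ₄ = (0,1)`
(indexed by `Fin 4`, so index `0` is `λ₁`, etc.). -/
def lam : Fin 4 → ZMod 2 × ZMod 2 := ![(1, 0), (0, 1), (1, 0), (0, 1)]

/-- `(i, j)` is an *adjacent* pair of edge indices if it is one of
`(1,2), (2,3), (3,4), (4,1)` (in `Fin 4` indexing: `(0,1), (1,2), (2,3), (3,0)`). -/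
def Adj (i j : Fin 4) : Prop := (i.val + 1) % 4 = j.val

/-- The relator set of the paper's presentation of `π₁(M_F, p₀)`: generators `β_{i,g}` for
`i ∈ Fin 4`, `g ∈ (ZMod 2)²`, and relators `β_{i,g}·β_{i,g+λᵢ}`,
`β_{i,g}·β_{j,g+λᵢ}·β_{i,g+λⱼ}⁻¹·β_{j,g}⁻¹` for adjacent `(i,j)`, and `β_{1,g}`, `β_{2,g}`. -/
def rels : Set (FreeGroup (Fin 4 × (ZMod 2 × ZMod 2))) :=
  {r | (∃ i g, r = FreeGroup.of (i, g) * FreeGroup.of (i, g + lam i)) ∨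
       (∃ i j g, Adj i j ∧
          r = FreeGroup.of (i, g) * FreeGroup.of (j, g + lam i) *
              (FreeGroup.of (i, g + lam j))⁻¹ * (FreeGroup.of (j, g))⁻¹) ∨
       (∃ g, r = FreeGroup.of (0, g) ∨ r = FreeGroup.of (1, g))}

/-- The presented group `G` with generators `β_{i,g}` and the relators `rels`. -/
abbrev G : Type := PresentedGroup rels

/-- The map `γ : (ZMod 2)² → W`, `γ(a,b) = s₁^a · s₂^b`. -/
def gam (p : ZMod 2 × ZMod 2) : W := s 0 ^ p.1.val * s 1 ^ p.2.val


abbrev A : Type := ZMod 2 × ZMod 2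

def b (i : Fin 4) (g : A) : G := PresentedGroup.of (i, g)

lemma rel_one {r : FreeGroup (Fin 4 × A)} (hr : r ∈ rels) : PresentedGroup.mk rels r = 1 :=
  (QuotientGroup.eq_one_iff r).mpr (Subgroup.subset_normalClosure hr)

lemma r1 (i : Fin 4) (g : A) : b i g * b i (g + lam i) = 1 := by
  have := rel_one (Or.inl ⟨i, g, rfl⟩)
  simpa [b, PresentedGroup.of] using this

lemma r2 {i j : Fin 4} (h : Adj i j) (g : A) :
    b i g * b j (g + lam i) * (b i (g + lam j))⁻¹ * (b j g)⁻¹ = 1 := by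
  have := rel_one (Or.inr (Or.inl ⟨i, j, g, h, rfl⟩))
  simpa [b, PresentedGroup.of] using this

lemma r30 (g : A) : b 0 g = 1 := by
  have := rel_one (Or.inr (Or.inr ⟨g, Or.inl rfl⟩))
  simpa [b, PresentedGroup.of] using this

lemma r31 (g : A) : b 1 g = 1 := by
  have := rel_one (Or.inr (Or.inr ⟨g, Or.inr rfl⟩))
  simpa [b, PresentedGroup.of] using this

lemma binv (i : Fin 4) (g : A) : (b i g)⁻¹ = b i (g + lam i) :=
  inv_eq_of_mul_eq_one_right (r1 i g)

lemma Acases (g : A) : g = (0,0) ∨ g = (0,1) ∨ g = (1,0) ∨ g = (1,1) := by revert g; decide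

lemma indep2 (g : A) : b 2 (g + lam 1) = b 2 g := by
  have h := r2 (show Adj 1 2 by rfl) g
  rw [r31, r31] at h
  simpa [mul_inv_eq_one] using h

lemma indep3 (g : A) : b 3 (g + lam 0) = b 3 g := by
  have h := r2 (show Adj 3 0 by rfl) g
  rw [r30, r30] at h
  simp only [one_mul, mul_one, inv_one] at h
  have := mul_inv_eq_one.mp h
  exact this.symm

lemma hb2 (g : A) : b 2 g = if g.1 = 0 then b 2 (0,0) else (b 2 (0,0))⁻¹ := by
  have e1 : b 2 (0,1) = b 2 (0,0) := by
    have := indep2 (0,0); simpa [show ((0:ZMod 2),(0:ZMod 2)) + lam 1 = (0,1) by decide] using this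
  have e2 : b 2 (1,0) = (b 2 (0,0))⁻¹ := by
    have := r1 2 (1,0)
    rw [show ((1:ZMod 2),(0:ZMod 2)) + lam 2 = (0,0) by decide] at this
    exact eq_inv_of_mul_eq_one_left this
  have e3 : b 2 (1,1) = (b 2 (0,0))⁻¹ := by
    have := indep2 (1,0)
    rw [show ((1:ZMod 2),(0:ZMod 2)) + lam 1 = (1,1) by decide] at this
    rw [this, e2]
  rcases Acases g with h|h|h|h <;> subst h
  · rw [if_pos rfl]
  · rw [if_pos rfl]; exact e1
  · rw [if_neg (by decide)]; exact e2
  · rw [if_neg (by decide)]; exact e3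

lemma hb3 (g : A) : b 3 g = if g.2 = 0 then b 3 (0,0) else (b 3 (0,0))⁻¹ := by
  have e1 : b 3 (1,0) = b 3 (0,0) := by
    have := indep3 (0,0); simpa [show ((0:ZMod 2),(0:ZMod 2)) + lam 0 = (1,0) by decide] using this
  have e2 : b 3 (0,1) = (b 3 (0,0))⁻¹ := by
    have := r1 3 (0,1)
    rw [show ((0:ZMod 2),(1:ZMod 2)) + lam 3 = (0,0) by decide] at this
    exact eq_inv_of_mul_eq_one_left this
  have e3 : b 3 (1,1) = (b 3 (0,0))⁻¹ := by
    have := indep3 (0,1)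
    rw [show ((0:ZMod 2),(1:ZMod 2)) + lam 0 = (1,1) by decide] at this
    rw [this, e2]
  rcases Acases g with h|h|h|h <;> subst h
  · rw [if_pos rfl]
  · rw [if_neg (by decide)]; exact e2
  · rw [if_pos (by decide)]; exact e1
  · rw [if_neg (by decide)]; exact e3

lemma hcomm : Commute (b 2 (0,0)) (b 3 (0,0)) := by
  have h := r2 (show Adj 2 3 by rfl) (0,0)
  rw [show ((0:ZMod 2),(0:ZMod 2)) + lam 2 = (1,0) by decide,
      show ((0:ZMod 2),(0:ZMod 2)) + lam 3 = (0,1) by decide] at h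
  rw [hb3 (1,0), hb2 (0,1)] at h
  simp only [show ((1:ZMod 2),(0:ZMod 2)).2 = 0 by decide, show ((0:ZMod 2),(1:ZMod 2)).1 = 0 by decide, if_pos rfl] at h
  simp only [if_true] at h
  have h1 : b 2 (0,0) * b 3 (0,0) * (b 2 (0,0))⁻¹ = b 3 (0,0) := mul_inv_eq_one.mp h
  exact mul_inv_eq_iff_eq_mul.mp h1

lemma lift_shift (a : A) : ∀ r ∈ rels,
    FreeGroup.lift (fun p : Fin 4 × A => (PresentedGroup.of (p.1, p.2 + a) : G)) r = 1 := by
  rintro r (⟨i, g, rfl⟩ | ⟨i, j, g, hadj, rfl⟩ | ⟨g, rfl | rfl⟩) <;>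
    simp only [map_mul, map_inv, FreeGroup.lift_apply_of]
  · have := r1 i (g + a)
    rw [show g + lam i + a = g + a + lam i by abel]
    exact this
  · have := r2 hadj (g + a)
    rw [show g + lam i + a = g + a + lam i by abel, show g + lam j + a = g + a + lam j by abel]
    exact this
  · exact r30 (g + a)
  · exact r31 (g + a)

def T (a : A) : G →* G := PresentedGroup.toGroup (lift_shift a)

lemma T_of (a : A) (i : Fin 4) (g : A) : T a (b i g) = b i (g + a) :=
  PresentedGroup.toGroup.of _

lemma T_comp (a c : A) : (T a).comp (T c) = T (a + c) := by
  ext p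
  obtain ⟨i, g⟩ := p
  show T a (T c (b i g)) = T (a+c) (b i g)
  rw [T_of, T_of, T_of, add_assoc, add_comm c a]

lemma T_zero : T 0 = MonoidHom.id G := by
  ext p
  obtain ⟨i, g⟩ := p
  show T 0 (b i g) = b i g
  rw [T_of, add_zero]

lemma haa (a : A) : a + a = 0 := by revert a; decide

def Taut (a : A) : G ≃* G where
  toFun := T a
  invFun := T a
  left_inv := fun x => by
    have : (T a).comp (T a) = MonoidHom.id G := by rw [T_comp, haa, T_zero]
    exact DFunLike.congr_fun this x
  right_inv := fun x => by
    have : (T a).comp (T a) = MonoidHom.id G := by rw [T_comp, haa, T_zero]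
    exact DFunLike.congr_fun this x
  map_mul' := (T a).map_mul

def tau : Multiplicative A →* MulAut G where
  toFun := fun a => Taut a.toAdd
  map_one' := by
    ext x
    show T 0 x = x
    rw [T_zero]; rfl
  map_mul' := fun a c => by
    ext x
    show T (a.toAdd + c.toAdd) x = T a.toAdd (T c.toAdd x)
    rw [← T_comp]; rfl

abbrev K : Type := SemidirectProduct G (Multiplicative A) tau

lemma tau_b (a : A) (i : Fin 4) (g : A) :
    tau (Multiplicative.ofAdd a) (b i g) = b i (g + a) := T_of a i g

def ff (i : Fin 4) : K := ⟨b i (lam i), Multiplicative.ofAdd (lam i)⟩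

lemma ff_sq (i : Fin 4) : ff i * ff i = 1 := by
  refine SemidirectProduct.ext ?_ ?_
  · show b i (lam i) * tau (Multiplicative.ofAdd (lam i)) (b i (lam i)) = 1
    rw [tau_b]
    exact r1 i (lam i)
  · show Multiplicative.ofAdd (lam i) * Multiplicative.ofAdd (lam i) = 1
    rw [← ofAdd_add, haa]
    rfl

lemma pp_left (i j : Fin 4) : ((ff i * ff j) * (ff i * ff j)).left =
    b i (lam i) * b j (lam j + lam i) *
      (b i (lam i + (lam i + lam j)) * b j (lam j + lam i + (lam i + lam j))) := by
  simp only [ff, SemidirectProduct.mul_left, SemidirectProduct.mul_right, map_mul,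
    ← ofAdd_add, tau_b]

lemma pp_right (i j : Fin 4) : ((ff i * ff j) * (ff i * ff j)).right =
    Multiplicative.ofAdd (lam i + lam j + (lam i + lam j)) := by
  simp only [SemidirectProduct.mul_right, ff, ← ofAdd_add]

instance (i j : Fin 4) : Decidable (Adj i j) := by unfold Adj; infer_instance

lemma lam0 : lam 0 = (1,0) := rfl
lemma lam1 : lam 1 = (0,1) := rfl
lemma lam2 : lam 2 = (1,0) := rfl
lemma lam3 : lam 3 = (0,1) := rfl
lemma z00 : (0+0 : ZMod 2) = 0 := rfl
lemma z01 : (0+1 : ZMod 2) = 1 := rfl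
lemma z10 : (1+0 : ZMod 2) = 1 := rfl
lemma z11 : (1+1 : ZMod 2) = 0 := rfl

lemma adj_cases : ∀ i j : Fin 4, Adj i j →
    (i = 0 ∧ j = 1) ∨ (i = 1 ∧ j = 2) ∨ (i = 2 ∧ j = 3) ∨ (i = 3 ∧ j = 0) := by decide

lemma adj_sq {i j : Fin 4} (h : Adj i j) : (ff i * ff j) * (ff i * ff j) = 1 := by
  have hright : ((ff i * ff j) * (ff i * ff j)).right = SemidirectProduct.right (1 : K) := by
    rw [pp_right, haa]; rfl
  refine SemidirectProduct.ext ?_ hright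
  show _ = SemidirectProduct.left (1 : K)
  rw [pp_left, SemidirectProduct.one_left]
  rcases adj_cases i j h with ⟨hi, hj⟩ | ⟨hi, hj⟩ | ⟨hi, hj⟩ | ⟨hi, hj⟩ <;> subst hi <;> subst hj <;>
    simp only [lam0, lam1, lam2, lam3, Prod.mk_add_mk, z00, z01, z10, z11]
  · simp [r30, r31]
  · rw [r31, r31, hb2 (1,1), hb2 (0,0)]
    norm_num
  · rw [hb2 (1,0), hb3 (1,1), hb2 (0,1), hb3 (0,0)]
    norm_num
    show (b 3 (0,0) * b 2 (0,0))⁻¹ * (b 2 (0,0) * b 3 (0,0)) = 1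
    rw [← hcomm.eq, inv_mul_cancel]
  · rw [r30, r30, hb3 (0,1), hb3 (1,0)]
    norm_num

lemma liftable : C4.IsLiftable ff := by
  intro i j
  by_cases hij : i = j
  · subst hij
    rw [C4.diagonal i, pow_one]
    exact ff_sq i
  · have hM : C4.M i j = if Adj i j ∨ Adj j i then 2 else 0 := by
      fin_cases i <;> fin_cases j <;> simp_all [C4, Adj]
    show (ff i * ff j) ^ C4.M i j = 1
    rw [hM]
    split_ifs with hadj
    · rw [pow_two]
      rcases hadj with h | h
      · exact adj_sq h
      · have h2 := adj_sq h
        calc ff i * ff j * (ff i * ff j)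
            = ff i * (ff j * ff i * (ff j * ff i)) * (ff i)⁻¹ := by group
          _ = 1 := by rw [h2]; group
    · rw [pow_zero]

noncomputable def cs : CoxeterSystem C4 W := C4.toCoxeterSystem

noncomputable def Θ : W →* K := cs.lift ⟨ff, liftable⟩

lemma Θs (i : Fin 4) : Θ (s i) = ff i := cs.lift_apply_simple liftable i

lemma q0 : s 0 * s 0 = 1 := cs.simple_mul_simple_self 0
lemma q1 : s 1 * s 1 = 1 := cs.simple_mul_simple_self 1
lemma q0' (w : W) : s 0 * (s 0 * w) = w := by rw [← mul_assoc, q0, one_mul]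
lemma q1' (w : W) : s 1 * (s 1 * w) = w := by rw [← mul_assoc, q1, one_mul]

lemma c01 : s 1 * s 0 = s 0 * s 1 := by
  have h := cs.simple_mul_simple_pow 0 1
  have hM : C4.M 0 1 = 2 := rfl
  rw [hM, pow_two] at h
  have h1 : s 0 * s 1 = (s 0 * s 1)⁻¹ := by
    rw [eq_inv_iff_mul_eq_one]; exact h
  have i0 : (s 0)⁻¹ = s 0 := inv_eq_of_mul_eq_one_right q0
  have i1 : (s 1)⁻¹ = s 1 := inv_eq_of_mul_eq_one_right q1
  rw [mul_inv_rev, i0, i1] at h1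
  exact h1.symm

lemma c01' (w : W) : s 1 * (s 0 * w) = s 0 * (s 1 * w) := by
  rw [← mul_assoc, c01, mul_assoc]

lemma v0 : (0 : ZMod 2).val = 0 := rfl
lemma v1 : (1 : ZMod 2).val = 1 := rfl

lemma gam0 : gam 0 = 1 := by simp [gam, v0]

lemma hgam (a c : A) : gam (a + c) = gam a * gam c := by
  rcases Acases a with h|h|h|h <;> subst h <;> rcases Acases c with h|h|h|h <;> subst h <;>
    simp [gam, Prod.mk_add_mk, z00, z01, z10, z11, v0, v1, mul_assoc, q0, q1, q0', q1', c01, c01']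

lemma ginv (a : A) : gam a * gam a = 1 := by rw [← hgam, haa, gam0]

noncomputable def γhom : Multiplicative A →* W where
  toFun := fun a => gam a.toAdd
  map_one' := gam0
  map_mul' := fun a c => hgam _ _

lemma compat (a : Multiplicative A) (ψ : G →* W)
    (hψ : ∀ (i : Fin 4) (g : A),
      ψ (PresentedGroup.of (i, g)) = gam (g + lam i) * s i * gam g) :
    ψ.comp (tau a).toMonoidHom = (MulAut.conj (γhom a)).toMonoidHom.comp ψ := by
  apply PresentedGroup.ext
  rintro ⟨i, g⟩
  show ψ (tau a (PresentedGroup.of (i, g))) = γhom a * ψ (PresentedGroup.of (i, g)) * (γhom a)⁻¹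
  have htau : tau a (PresentedGroup.of (i, g)) = PresentedGroup.of (i, g + a.toAdd) :=
    T_of a.toAdd i g
  have hinv : (γhom a)⁻¹ = γhom a := by
    rw [inv_eq_iff_mul_eq_one]; exact ginv a.toAdd
  rw [htau, hψ, hψ, hinv]
  show gam (g + a.toAdd + lam i) * s i * gam (g + a.toAdd)
      = gam a.toAdd * (gam (g + lam i) * s i * gam g) * gam a.toAdd
  rw [show g + a.toAdd + lam i = a.toAdd + (g + lam i) by abel, hgam,
     show g + a.toAdd = g + a.toAdd from rfl, hgam g a.toAdd]
  simp [mul_assoc]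

lemma hsmul : ∀ p : A, p.1.val • (((1:ZMod 2),(0:ZMod 2)) : A) + p.2.val • (((0:ZMod 2),(1:ZMod 2)) : A) = p := by
  decide

lemma ff0 : ff 0 = SemidirectProduct.inr (Multiplicative.ofAdd (((1:ZMod 2),(0:ZMod 2)) : A)) := by
  refine SemidirectProduct.ext ?_ ?_
  · show b 0 (lam 0) = _
    rw [r30]; rfl
  · rfl

lemma ff1 : ff 1 = SemidirectProduct.inr (Multiplicative.ofAdd (((0:ZMod 2),(1:ZMod 2)) : A)) := by
  refine SemidirectProduct.ext ?_ ?_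
  · show b 1 (lam 1) = _
    rw [r31]; rfl
  · rfl

lemma Θgam (p : A) : Θ (gam p) = SemidirectProduct.inr (Multiplicative.ofAdd p) := by
  show Θ (s 0 ^ p.1.val * s 1 ^ p.2.val) = _
  rw [map_mul, map_pow, map_pow, Θs, Θs, ff0, ff1,
    ← map_pow SemidirectProduct.inr, ← map_pow SemidirectProduct.inr, ← map_mul]
  congr 1
  rw [← ofAdd_nsmul, ← ofAdd_nsmul, ← ofAdd_add, hsmul]

lemma addhelp (l g : A) : l + (g + l) = g := by
  rw [add_comm l, add_assoc, haa, add_zero]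

lemma addhelp2 (l g : A) : g + l + l + g = 0 := by
  rw [add_assoc g l l, haa, add_zero, haa]

lemma ΘΨ (ψ : G →* W)
    (hψ : ∀ (i : Fin 4) (g : A),
      ψ (PresentedGroup.of (i, g)) = gam (g + lam i) * s i * gam g) :
    Θ.comp ψ = SemidirectProduct.inl := by
  apply PresentedGroup.ext
  rintro ⟨i, g⟩
  show Θ (ψ (PresentedGroup.of (i, g))) = SemidirectProduct.inl (PresentedGroup.of (i, g))
  rw [hψ, map_mul, map_mul, Θgam, Θgam, Θs]
  refine SemidirectProduct.ext ?_ ?_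
  · show 1 * tau (Multiplicative.ofAdd (g + lam i)) (b i (lam i)) *
      tau (Multiplicative.ofAdd (g + lam i) * Multiplicative.ofAdd (lam i)) 1 = _
    rw [map_one, mul_one, one_mul, tau_b, addhelp]
    rfl
  · show Multiplicative.ofAdd (g + lam i) * Multiplicative.ofAdd (lam i) * Multiplicative.ofAdd g
        = 1
    rw [← ofAdd_add, ← ofAdd_add, addhelp2]
    rfl

lemma φgam (φ : W →* Multiplicative A)
    (h1 : φ (s 0) = Multiplicative.ofAdd (1, 0)) (h2 : φ (s 1) = Multiplicative.ofAdd (0, 1))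
    (p : A) : φ (gam p) = Multiplicative.ofAdd p := by
  show φ (s 0 ^ p.1.val * s 1 ^ p.2.val) = _
  rw [map_mul, map_pow, map_pow, h1, h2, ← ofAdd_nsmul, ← ofAdd_nsmul, ← ofAdd_add, hsmul]

lemma φs (φ : W →* Multiplicative A)
    (h1 : φ (s 0) = Multiplicative.ofAdd (1, 0)) (h2 : φ (s 1) = Multiplicative.ofAdd (0, 1))
    (h3 : φ (s 2) = Multiplicative.ofAdd (1, 0)) (h4 : φ (s 3) = Multiplicative.ofAdd (0, 1))
    (i : Fin 4) : φ (s i) = Multiplicative.ofAdd (lam i) := by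
  fin_cases i
  · show φ (s 0) = Multiplicative.ofAdd (lam 0)
    rw [h1]; rfl
  · show φ (s 1) = Multiplicative.ofAdd (lam 1)
    rw [h2]; rfl
  · show φ (s 2) = Multiplicative.ofAdd (lam 2)
    rw [h3]; rfl
  · show φ (s 3) = Multiplicative.ofAdd (lam 3)
    rw [h4]; rfl

/-- If `ψ : G → W` is the homomorphism determined by `β_{i,g} ↦ γ(g + λᵢ) · sᵢ · γ(g)` and
`φ : W → (ZMod 2)²` is the homomorphism with `φ(s₁) = φ(s₃) = (1,0)`, `φ(s₂) = φ(s₄) = (0,1)`,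
then `ψ` is injective and its image equals `ker φ`; i.e. the sequence
`1 → G → W → (ZMod 2)² → 1` is exact. -/
theorem stmt15 (ψ : G →* W)
    (hψ : ∀ (i : Fin 4) (g : ZMod 2 × ZMod 2),
      ψ (PresentedGroup.of (i, g)) = gam (g + lam i) * s i * gam g)
    (φ : W →* Multiplicative (ZMod 2 × ZMod 2))
    (h1 : φ (s 0) = Multiplicative.ofAdd (1, 0)) (h2 : φ (s 1) = Multiplicative.ofAdd (0, 1))
    (h3 : φ (s 2) = Multiplicative.ofAdd (1, 0)) (h4 : φ (s 3) = Multiplicative.ofAdd (0, 1)) :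
    Function.Injective ψ ∧ ψ.range = φ.ker := by
  have hΘΨ := ΘΨ ψ hψ
  constructor
  · intro u v huv
    have hu : Θ (ψ u) = SemidirectProduct.inl u := DFunLike.congr_fun hΘΨ u
    have hv : Θ (ψ v) = SemidirectProduct.inl v := DFunLike.congr_fun hΘΨ v
    apply SemidirectProduct.inl_injective (φ := tau)
    rw [← hu, ← hv, huv]
  · -- range = ker
    have hφψ : ∀ u : G, φ (ψ u) = 1 := by
      have : φ.comp ψ = 1 := by
        apply PresentedGroup.ext
        rintro ⟨i, g⟩
        show φ (ψ (PresentedGroup.of (i, g))) = 1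
        rw [hψ, map_mul, map_mul, φgam φ h1 h2, φgam φ h1 h2, φs φ h1 h2 h3 h4,
          ← ofAdd_add, ← ofAdd_add, addhelp2]
        rfl
      intro u
      exact DFunLike.congr_fun this u
    have hrt : (SemidirectProduct.rightHom).comp Θ = φ := by
      apply cs.ext_simple
      intro i
      show SemidirectProduct.rightHom (Θ (s i)) = φ (s i)
      rw [Θs, φs φ h1 h2 h3 h4]
      rfl
    set Pi : K →* W := SemidirectProduct.lift ψ γhom (fun a => compat a ψ hψ) with hPi
    have hPiΘ : Pi.comp Θ = MonoidHom.id W := by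
      apply cs.ext_simple
      intro i
      show Pi (Θ (s i)) = s i
      rw [Θs, show ff i = (⟨b i (lam i), Multiplicative.ofAdd (lam i)⟩ : K) from rfl,
        SemidirectProduct.mk_eq_inl_mul_inr, map_mul, hPi,
        SemidirectProduct.lift_inl, SemidirectProduct.lift_inr]
      show ψ (PresentedGroup.of (i, lam i)) * gam (lam i) = s i
      rw [hψ, haa, gam0, one_mul, mul_assoc, ginv, mul_one]
    ext w
    constructor
    · rintro ⟨u, rfl⟩
      exact hφψ u
    · intro hw
      have hw1 : φ w = 1 := hw
      have hr : SemidirectProduct.rightHom (Θ w) = 1 := by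
        rw [← hw1, ← hrt]; rfl
      have hΘw : Θ w = SemidirectProduct.inl ((Θ w).left) := by
        rw [← SemidirectProduct.inl_left_mul_inr_right (Θ w),
          show (Θ w).right = SemidirectProduct.rightHom (Θ w) from rfl, hr]
        simp
      refine ⟨(Θ w).left, ?_⟩
      calc ψ ((Θ w).left)
          = Pi (SemidirectProduct.inl ((Θ w).left)) :=
            (SemidirectProduct.lift_inl _ _ _ _).symm
        _ = Pi (Θ w) := by rw [← hΘw]
        _ = w := DFunLike.congr_fun hPiΘ w
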